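/- For every positive integer n there exists a finite group G and a finite-dimensional rational representation W of G such that the space of G-invariants W^G is zero, but for every subgroup H of G generated by at most n elements, the space of H-invariants W^H is nonzero. Concretely, G = (ℤ/2ℤ)^{n+1} with W the quotient of the rational regular representation by its subspace of G-invariants has this property. -/

import Mathlib

/-- The group `(ℤ/2ℤ)^(n+1)`, written multiplicatively. -/
abbrev ElemAbelianTwo (n : ℕ) : Type := Multiplicative (Fin (n + 1) → ZMod 2)

/-- The rational regular representation of `(ℤ/2ℤ)^(n+1)` (on `ℚ[G]`). -/
noncomputable def regRep (n : ℕ) :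
    Representation ℚ (ElemAbelianTwo n) (ElemAbelianTwo n →₀ ℚ) :=
  { toFun := fun g => Finsupp.lmapDomain ℚ ℚ (g • ·)
    map_one' := by ext x y; simp
    map_mul' := fun x y => by ext z w; simp [mul_assoc] }

/-- The quotient of the regular representation by its subspace of invariants. -/
noncomputable abbrev regQuot (n : ℕ) : Type :=
  (ElemAbelianTwo n →₀ ℚ) ⧸ (regRep n).invariants

lemma regRep_invariants_stable (n : ℕ) (g : ElemAbelianTwo n) :
    (regRep n).invariants ≤ ((regRep n).invariants).comap (regRep n g) := by
  intro v hv
  rw [Representation.mem_invariants] at hv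
  rw [Submodule.mem_comap, Representation.mem_invariants]
  intro h
  have key : ∀ (a b : ElemAbelianTwo n) (w : ElemAbelianTwo n →₀ ℚ),
      regRep n a (regRep n b w) = regRep n (a * b) w := by
    intro a b w; rw [map_mul]; rfl
  rw [key, mul_comm, ← key, hv h]

/-- The representation of `(ℤ/2ℤ)^(n+1)` on the quotient of its regular representation
by the invariants. -/
noncomputable def regQuotRep (n : ℕ) : Representation ℚ (ElemAbelianTwo n) (regQuot n) where
  toFun g := Submodule.mapQ _ _ (regRep n g) (regRep_invariants_stable n g)
  map_one' := by
    apply Submodule.linearMap_qext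
    refine LinearMap.ext fun x => ?_
    simp only [LinearMap.comp_apply, Submodule.mkQ_apply, Submodule.mapQ_apply,
      map_one, Module.End.one_apply]
  map_mul' g h := by
    apply Submodule.linearMap_qext
    refine LinearMap.ext fun x => ?_
    simp only [LinearMap.comp_apply, Submodule.mkQ_apply, Submodule.mapQ_apply,
      Module.End.mul_apply, map_mul]

lemma regRep_apply (n : ℕ) (g x : ElemAbelianTwo n) (f : ElemAbelianTwo n →₀ ℚ) :
    regRep n g f x = f (g⁻¹ * x) := by
  change Finsupp.mapDomain (fun y => g • y) f x = _
  have h := Finsupp.mapDomain_apply (MulAction.injective g) f (g⁻¹ * x)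
  simpa [smul_eq_mul] using h

lemma exists_not_mem_closure (n : ℕ) (S : Finset (ElemAbelianTwo n)) (h : S.card ≤ n) :
    ∃ g : ElemAbelianTwo n, g ∉ Subgroup.closure (S : Set (ElemAbelianTwo n)) := by
  classical
  set V := Fin (n + 1) → ZMod 2
  set T : Finset V := S.image Multiplicative.toAdd with hT
  set p : Submodule (ZMod 2) V := Submodule.span (ZMod 2) (T : Set V) with hp
  have hfin : Module.finrank (ZMod 2) p ≤ n :=
    le_trans (finrank_span_finset_le_card T) (le_trans (Finset.card_image_le) h)
  have hne : p ≠ ⊤ := by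
    intro htop
    have h1 : Module.finrank (ZMod 2) V = n + 1 := by
      simp [V, Module.finrank_pi]
    have h2 : Module.finrank (ZMod 2) p = n + 1 := by
      rw [htop, finrank_top, h1]
    omega
  obtain ⟨x, hx⟩ : ∃ x : V, x ∉ p := by
    by_contra hc
    push_neg at hc
    exact hne (Submodule.eq_top_iff'.2 hc)
  refine ⟨Multiplicative.ofAdd x, fun hmem => hx ?_⟩
  have hle : Subgroup.closure (S : Set (ElemAbelianTwo n)) ≤
      AddSubgroup.toSubgroup p.toAddSubgroup := by
    refine (Subgroup.closure_le _).2 fun s hs => ?_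
    show Multiplicative.toAdd s ∈ p
    exact Submodule.subset_span (by rw [hT]; exact_mod_cast Finset.mem_image_of_mem _ hs)
  exact hle hmem

open Classical in
/-- No nonzero invariants in the quotient. -/
lemma regQuot_invariants_zero (n : ℕ) (w : regQuot n)
    (hw : ∀ g : ElemAbelianTwo n, regQuotRep n g w = w) : w = 0 := by
  classical
  obtain ⟨v, rfl⟩ := Submodule.Quotient.mk_surjective _ w
  have hmem : ∀ g : ElemAbelianTwo n, regRep n g v - v ∈ (regRep n).invariants := by
    intro g
    have := hw g
    rw [show regQuotRep n g (Submodule.Quotient.mk v)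
        = Submodule.Quotient.mk (regRep n g v) from rfl] at this
    rwa [Submodule.Quotient.eq] at this
  have : Fintype (ElemAbelianTwo n) := Fintype.ofFinite _
  set s : ElemAbelianTwo n →₀ ℚ := ∑ g : ElemAbelianTwo n, regRep n g v with hs
  have hsinv : s ∈ (regRep n).invariants := by
    rw [Representation.mem_invariants]
    intro h
    rw [hs, map_sum]
    have key : ∀ g : ElemAbelianTwo n, regRep n h (regRep n g v) = regRep n (h * g) v := by
      intro g; rw [map_mul]; rfl
    simp_rw [key]
    exact Fintype.sum_bijective (h * ·) (Group.mulLeft_bijective h) _ _ (fun g => rfl)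
  have hsub : s - (Fintype.card (ElemAbelianTwo n) : ℚ) • v ∈ (regRep n).invariants := by
    have : s - (Fintype.card (ElemAbelianTwo n) : ℚ) • v = ∑ g : ElemAbelianTwo n, (regRep n g v - v) := by
      rw [Finset.sum_sub_distrib, ← hs, Finset.sum_const, Finset.card_univ]
      simp [sub_eq_sub_iff_sub_eq_sub, Nat.cast_smul_eq_nsmul ℚ]
    rw [this]
    exact Submodule.sum_mem _ fun g _ => hmem g
  have hv : v ∈ (regRep n).invariants := by
    have hcard : (Fintype.card (ElemAbelianTwo n) : ℚ) ≠ 0 := by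
      exact_mod_cast Fintype.card_ne_zero
    have h1 : (Fintype.card (ElemAbelianTwo n) : ℚ) • v ∈ (regRep n).invariants :=
      (Submodule.sub_mem_iff_right _ hsinv).1 hsub
    have := Submodule.smul_mem _ ((Fintype.card (ElemAbelianTwo n) : ℚ)⁻¹) h1
    rwa [smul_smul, inv_mul_cancel₀ hcard, one_smul] at this
  rwa [Submodule.Quotient.mk_eq_zero]

lemma regQuot_H_invariant (n : ℕ) (S : Finset (ElemAbelianTwo n)) (hS : S.card ≤ n) :
    ∃ w : regQuot n, w ≠ 0 ∧
      ∀ g ∈ Subgroup.closure (S : Set (ElemAbelianTwo n)), regQuotRep n g w = w := by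
  classical
  have : Fintype (ElemAbelianTwo n) := Fintype.ofFinite _
  set H := Subgroup.closure (S : Set (ElemAbelianTwo n)) with hH
  obtain ⟨g0, hg0⟩ := exists_not_mem_closure n S hS
  set v : ElemAbelianTwo n →₀ ℚ :=
    ∑ h ∈ Finset.univ.filter (· ∈ H), Finsupp.single h 1 with hv
  have hval : ∀ x : ElemAbelianTwo n, v x = if x ∈ H then 1 else 0 := by
    intro x
    rw [hv, Finsupp.finset_sum_apply]
    simp_rw [Finsupp.single_apply]
    rw [Finset.sum_ite_eq' _ x (fun _ => (1 : ℚ))]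
    simp
  have hHval : ∀ g ∈ H, regRep n g v = v := by
    intro g hg
    ext x
    rw [regRep_apply, hval, hval]
    congr 1
    simp only [eq_iff_iff]
    constructor
    · intro hx
      have := H.mul_mem hg hx
      rwa [mul_inv_cancel_left] at this
    · intro hx
      exact H.mul_mem (H.inv_mem hg) hx
  refine ⟨Submodule.Quotient.mk v, ?_, ?_⟩
  · intro h0
    rw [Submodule.Quotient.mk_eq_zero] at h0
    rw [Representation.mem_invariants] at h0
    have := congrArg (fun f : ElemAbelianTwo n →₀ ℚ => f g0) (h0 g0)
    rw [regRep_apply, inv_mul_cancel, hval, hval, if_pos H.one_mem, if_neg hg0] at this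
    exact one_ne_zero this
  · intro g hg
    rw [show regQuotRep n g (Submodule.Quotient.mk v)
        = Submodule.Quotient.mk (regRep n g v) from rfl, hHval g hg]


noncomputable def regQuotRepULift (n : ℕ) :
    Representation ℚ (ULift.{u} (ElemAbelianTwo n)) (ULift.{v} (regQuot n)) where
  toFun g := ULift.moduleEquiv.symm.toLinearMap ∘ₗ
    (regQuotRep n g.down) ∘ₗ ULift.moduleEquiv.toLinearMap
  map_one' := by
    refine LinearMap.ext fun x => ?_
    change ULift.up (regQuotRep n 1 x.down) = x
    rw [map_one]; rfl
  map_mul' g h := by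
    refine LinearMap.ext fun x => ?_
    change ULift.up (regQuotRep n (g * h).down x.down)
      = ULift.up (regQuotRep n g.down (regQuotRep n h.down x.down))
    rw [ULift.mul_down, map_mul]; rfl

/-- for every `n > 0` there is a finite group `G` and a finite-dimensional
rational representation `W` of `G` with `W^G = 0` but `W^H ≠ 0` for every subgroup `H`
generated by at most `n` elements; concretely, `G = (ℤ/2ℤ)^(n+1)` acting on the
quotient of its rational regular representation by the invariants has this property. -/
theorem exists_rep_with_no_G_invariants_but_H_invariants
    (n : ℕ) (hn : 0 < n) :
    (∃ (G : GrpCat) (_ : Finite G) (W : ModuleCat ℚ) (ρ : Representation ℚ G W),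
      FiniteDimensional ℚ W ∧
      (∀ w : W, (∀ g : G, ρ g w = w) → w = 0) ∧
      (∀ S : Finset G, S.card ≤ n → ∃ w : W, w ≠ 0 ∧
        ∀ g ∈ Subgroup.closure (S : Set G), ρ g w = w)) ∧
    (FiniteDimensional ℚ (regQuot n) ∧
      (∀ w : regQuot n, (∀ g : ElemAbelianTwo n, regQuotRep n g w = w) → w = 0) ∧
      (∀ S : Finset (ElemAbelianTwo n), S.card ≤ n → ∃ w : regQuot n, w ≠ 0 ∧
        ∀ g ∈ Subgroup.closure (S : Set (ElemAbelianTwo n)), regQuotRep n g w = w)) := by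
  classical
  have hfd : FiniteDimensional ℚ (regQuot n) := by
    have : Fintype (ElemAbelianTwo n) := Fintype.ofFinite _
    infer_instance
  have h2 := regQuot_invariants_zero n
  have h3 := fun S hS => regQuot_H_invariant n S hS
  refine ⟨⟨GrpCat.of (ULift (ElemAbelianTwo n)),
    inferInstanceAs (Finite (ULift (ElemAbelianTwo n))),
    ModuleCat.of ℚ (ULift (regQuot n)), regQuotRepULift n, ?_, ?_, ?_⟩, hfd, h2, h3⟩
  · exact Module.Finite.equiv ULift.moduleEquiv.symm
  · intro w hw
    have : ULift.moduleEquiv (R := ℚ) w = 0 := by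
      refine h2 _ fun g => ?_
      have := hw (ULift.up g)
      exact congrArg (ULift.moduleEquiv (R := ℚ)) this
    exact ULift.down_injective this
  · intro S hS
    set S' : Finset (ElemAbelianTwo n) := S.image ULift.down with hS'
    obtain ⟨w₀, hw₀, hinv⟩ := h3 S' (le_trans Finset.card_image_le hS)
    refine ⟨(ULift.moduleEquiv (R := ℚ) (M := regQuot n)).symm w₀, fun h => hw₀ (congrArg ULift.down h), ?_⟩
    intro g hg
    have hg' : g.down ∈ Subgroup.closure (S' : Set (ElemAbelianTwo n)) := by
      refine Subgroup.closure_induction (fun s hs => Subgroup.subset_closure ?_)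
        ?_ ?_ ?_ hg
      · exact_mod_cast Finset.mem_image_of_mem ULift.down hs
      · exact (Subgroup.closure _).one_mem
      · intro a b _ _ ha hb
        exact (Subgroup.closure _).mul_mem ha hb
      · intro a _ ha
        exact (Subgroup.closure _).inv_mem ha
    exact congrArg ULift.up (hinv g.down hg')
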